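/- (Consistent dispersions exist along the whole horizon.) Fix N ≥ 1 devices, δ > 0, and a horizon K ≥ 1. For each step k ∈ {0,…,K} let e̲_j(k) ≤ ē_j(k) be energy bounds, and for each k ∈ {0,…,K−1} let p̲_j(k) ≤ p̄_j(k) be power bounds, such that Assumptions 1 and 2 hold for every transition k → k+1. Let E(0),…,E(K) be real numbers such that max(Σ_j e̲_j(k+1), E(k) + δ·Σ_j p̲_j(k)) ≤ E(k+1) ≤ min(Σ_j ē_j(k+1), E(k) + δ·Σ_j p̄_j(k)) for every k ∈ {0,…,K−1}, and suppose there exists a consistent dispersion of E(0) at step 0. Then for every k ∈ {0,…,K−1} there exists a consistent dispersion of E(k) at step k. -/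
import Mathlib


open Finset

lemma key_consistent (N : ℕ) (δ : ℝ)
    (L U a b p q : Fin N → ℝ)
    (hA2a : ∀ j, ∃ x : ℝ, L j ≤ x ∧ x ≤ U j ∧ a j ≤ x + δ * p j ∧ x + δ * q j ≤ b j)
    (hA2b : ∀ j, L j + δ * p j ≤ a j ∧ b j ≤ U j + δ * q j)
    (E : ℝ) (hEl : ∑ j, L j ≤ E) (hEu : E ≤ ∑ j, U j) :
    ∃ e : Fin N → ℝ, (∀ j, L j ≤ e j ∧ e j ≤ U j) ∧ (∑ j, e j = E) ∧
      max (∑ j, a j) (E + δ * ∑ j, p j) = ∑ j, max (a j) (e j + δ * p j) ∧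
      min (∑ j, b j) (E + δ * ∑ j, q j) = ∑ j, min (b j) (e j + δ * q j) := by
  set z : Fin N → ℝ := fun j => a j - δ * p j with hz
  set y : Fin N → ℝ := fun j => b j - δ * q j with hy
  have hLz : ∀ j, L j ≤ z j := fun j => by have := (hA2b j).1; simp [hz]; linarith
  have hzy : ∀ j, z j ≤ y j := fun j => by
    obtain ⟨x, _, _, h3, h4⟩ := hA2a j
    simp [hz, hy]; linarith
  have hyU : ∀ j, y j ≤ U j := fun j => by have := (hA2b j).2; simp [hy]; linarith
  set g : ℝ → Fin N → ℝ := fun t j =>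
    L j + min t 1 * (z j - L j) + min (max (t - 1) 0) 1 * (y j - z j)
      + max (t - 2) 0 * (U j - y j) with hg
  set f : ℝ → ℝ := fun t => ∑ j, g t j with hf
  have hcont : Continuous f := by
    apply continuous_finset_sum
    intro j _
    fun_prop
  have hIVT := intermediate_value_Icc (by norm_num : (0:ℝ) ≤ 3) hcont.continuousOn
  have hf0 : f 0 = ∑ j, L j := by
    simp [hf, hg]
  have hf3 : f 3 = ∑ j, U j := by
    apply Finset.sum_congr rfl
    intro j _
    have h1 : min (3:ℝ) 1 = 1 := by norm_num
    have h2 : min (max ((3:ℝ) - 1) 0) 1 = 1 := by norm_num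
    have h3 : max ((3:ℝ) - 2) 0 = 1 := by norm_num
    simp only [hg, h1, h2, h3]
    ring
  have hmem : E ∈ Set.Icc (f 0) (f 3) := by rw [hf0, hf3]; exact ⟨hEl, hEu⟩
  obtain ⟨t, ht, hft0⟩ := hIVT hmem
  have hft : ∑ j, g t j = E := hft0
  obtain ⟨ht0, ht3⟩ := ht
  refine ⟨g t, ?_, hft, ?_, ?_⟩
  · -- bounds
    intro j
    have hc1a : 0 ≤ min t 1 := le_min ht0 (by norm_num)
    have hc1b : min t 1 ≤ 1 := min_le_right _ _
    have hc2a : 0 ≤ min (max (t-1) 0) 1 := le_min (le_max_right _ _) (by norm_num)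
    have hc2b : min (max (t-1) 0) 1 ≤ 1 := min_le_right _ _
    have hc3a : 0 ≤ max (t-2) 0 := le_max_right _ _
    have hc3b : max (t-2) 0 ≤ 1 := by
      apply max_le (by linarith) (by norm_num)
    have d1 : 0 ≤ z j - L j := by linarith [hLz j]
    have d2 : 0 ≤ y j - z j := by linarith [hzy j]
    have d3 : 0 ≤ U j - y j := by linarith [hyU j]
    constructor
    · have := mul_nonneg hc1a d1
      have := mul_nonneg hc2a d2
      have := mul_nonneg hc3a d3
      simp only [hg]; linarith
    · have := mul_le_of_le_one_left d1 hc1b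
      have := mul_le_of_le_one_left d2 hc2b
      have := mul_le_of_le_one_left d3 hc3b
      simp only [hg]; linarith
  · -- max equality
    rcases le_total t 1 with h1 | h1
    · -- all e j ≤ z j
      have hez : ∀ j, g t j + δ * p j ≤ a j := by
        intro j
        have hm1 : max (t-1) 0 = 0 := max_eq_right (by linarith)
        have hm2 : max (t-2) 0 = 0 := max_eq_right (by linarith)
        have hc1b : min t 1 ≤ 1 := min_le_right _ _
        have d1 : 0 ≤ z j - L j := by linarith [hLz j]
        have := mul_le_of_le_one_left d1 hc1b
        simp only [hg, hm1, hm2, hz] at *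
        simp at *
        nlinarith
      have hs : ∑ j, max (a j) (g t j + δ * p j) = ∑ j, a j :=
        Finset.sum_congr rfl (fun j _ => max_eq_left (hez j))
      rw [hs]
      apply max_eq_left
      have : E + δ * ∑ j, p j = ∑ j, (g t j + δ * p j) := by
        rw [Finset.sum_add_distrib, hft, Finset.mul_sum]
      rw [this]
      exact Finset.sum_le_sum (fun j _ => hez j)
    · -- all e j ≥ z j
      have hez : ∀ j, a j ≤ g t j + δ * p j := by
        intro j
        have hc1 : min t 1 = 1 := min_eq_right h1
        have hc2a : 0 ≤ min (max (t-1) 0) 1 := le_min (le_max_right _ _) (by norm_num)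
        have hc3a : 0 ≤ max (t-2) 0 := le_max_right _ _
        have d2 : 0 ≤ y j - z j := by linarith [hzy j]
        have d3 : 0 ≤ U j - y j := by linarith [hyU j]
        have := mul_nonneg hc2a d2
        have := mul_nonneg hc3a d3
        simp only [hg, hc1, hz, hy] at *
        nlinarith
      have hs : ∑ j, max (a j) (g t j + δ * p j) = ∑ j, (g t j + δ * p j) :=
        Finset.sum_congr rfl (fun j _ => max_eq_right (hez j))
      rw [hs]
      have hsum : ∑ j, (g t j + δ * p j) = E + δ * ∑ j, p j := by
        rw [Finset.sum_add_distrib, hft, Finset.mul_sum]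
      rw [hsum]
      apply max_eq_right
      rw [← hsum]
      exact Finset.sum_le_sum (fun j _ => hez j)
  · -- min equality
    rcases le_total t 2 with h2 | h2
    · -- all e j ≤ y j
      have hey : ∀ j, g t j + δ * q j ≤ b j := by
        intro j
        have hm2 : max (t-2) 0 = 0 := max_eq_right (by linarith)
        have hc1b : min t 1 ≤ 1 := min_le_right _ _
        have hc2b : min (max (t-1) 0) 1 ≤ 1 := min_le_right _ _
        have hc1a : 0 ≤ min t 1 := le_min ht0 (by norm_num)
        have hc2a : 0 ≤ min (max (t-1) 0) 1 := le_min (le_max_right _ _) (by norm_num)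
        have d1 : 0 ≤ z j - L j := by linarith [hLz j]
        have d2 : 0 ≤ y j - z j := by linarith [hzy j]
        have e1 := mul_le_of_le_one_left d1 hc1b
        have e2 := mul_le_of_le_one_left d2 hc2b
        simp only [hg, hm2, hz, hy] at *
        nlinarith
      have hs : ∑ j, min (b j) (g t j + δ * q j) = ∑ j, (g t j + δ * q j) :=
        Finset.sum_congr rfl (fun j _ => min_eq_right (hey j))
      rw [hs]
      have hsum : ∑ j, (g t j + δ * q j) = E + δ * ∑ j, q j := by
        rw [Finset.sum_add_distrib, hft, Finset.mul_sum]
      rw [hsum]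
      apply min_eq_right
      rw [← hsum]
      exact Finset.sum_le_sum (fun j _ => hey j)
    · -- all e j ≥ y j
      have hey : ∀ j, b j ≤ g t j + δ * q j := by
        intro j
        have hc1 : min t 1 = 1 := min_eq_right (by linarith)
        have hc2 : min (max (t-1) 0) 1 = 1 := by
          rw [max_eq_left (by linarith : (0:ℝ) ≤ t - 1)]
          exact min_eq_right (by linarith)
        have hc3a : 0 ≤ max (t-2) 0 := le_max_right _ _
        have d3 : 0 ≤ U j - y j := by linarith [hyU j]
        have := mul_nonneg hc3a d3
        simp only [hg, hc1, hc2, hz, hy] at *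
        nlinarith
      have hs : ∑ j, min (b j) (g t j + δ * q j) = ∑ j, b j :=
        Finset.sum_congr rfl (fun j _ => min_eq_left (hey j))
      rw [hs]
      apply min_eq_left
      have : E + δ * ∑ j, q j = ∑ j, (g t j + δ * q j) := by
        rw [Finset.sum_add_distrib, hft, Finset.mul_sum]
      rw [this]
      exact Finset.sum_le_sum (fun j _ => hey j)

/-- Consistent dispersions exist along the whole horizon: if Assumptions 1 and 2 hold
for every transition, the aggregated schedule is feasible for the aggregated model at
every step, and the initial aggregated energy admits a consistent dispersion, then a
consistent dispersion exists at every step of the horizon. -/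
theorem consistent_dispersions_along_horizon
    (N : ℕ) (hN : 1 ≤ N) (δ : ℝ) (hδ : 0 < δ) (K : ℕ) (hK : 1 ≤ K)
    (elb eub : ℕ → Fin N → ℝ) (plb pub : ℕ → Fin N → ℝ)
    (he : ∀ k ≤ K, ∀ j, elb k j ≤ eub k j)
    (hp : ∀ k < K, ∀ j, plb k j ≤ pub k j)
    -- Assumption 1 for every transition k → k+1
    (hA1 : ∀ k < K, ∀ j, ∀ x : ℝ, elb k j ≤ x → x ≤ eub k j →
      max (elb (k+1) j) (x + δ * plb k j) ≤ min (eub (k+1) j) (x + δ * pub k j))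
    -- Assumption 2(a) for every transition k → k+1
    (hA2a : ∀ k < K, ∀ j, ∃ x : ℝ, elb k j ≤ x ∧ x ≤ eub k j ∧
      elb (k+1) j ≤ x + δ * plb k j ∧ x + δ * pub k j ≤ eub (k+1) j)
    -- Assumption 2(b) for every transition k → k+1
    (hA2b : ∀ k < K, ∀ j,
      elb k j + δ * plb k j ≤ elb (k+1) j ∧ eub (k+1) j ≤ eub k j + δ * pub k j)
    (E : ℕ → ℝ)
    -- the aggregated schedule is feasible for the aggregated model
    (hE : ∀ k < K,
      max (∑ j, elb (k+1) j) (E k + δ * ∑ j, plb k j) ≤ E (k+1) ∧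
      E (k+1) ≤ min (∑ j, eub (k+1) j) (E k + δ * ∑ j, pub k j))
    -- a consistent dispersion of E 0 exists at step 0
    (h0 : ∃ e : Fin N → ℝ,
      (∀ j, elb 0 j ≤ e j ∧ e j ≤ eub 0 j) ∧ (∑ j, e j = E 0) ∧
      max (∑ j, elb 1 j) (E 0 + δ * ∑ j, plb 0 j)
        = ∑ j, max (elb 1 j) (e j + δ * plb 0 j) ∧
      min (∑ j, eub 1 j) (E 0 + δ * ∑ j, pub 0 j)
        = ∑ j, min (eub 1 j) (e j + δ * pub 0 j)) :
    ∀ k < K, ∃ e : Fin N → ℝ,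
      (∀ j, elb k j ≤ e j ∧ e j ≤ eub k j) ∧ (∑ j, e j = E k) ∧
      max (∑ j, elb (k+1) j) (E k + δ * ∑ j, plb k j)
        = ∑ j, max (elb (k+1) j) (e j + δ * plb k j) ∧
      min (∑ j, eub (k+1) j) (E k + δ * ∑ j, pub k j)
        = ∑ j, min (eub (k+1) j) (e j + δ * pub k j) := by
  
  intro k hk
  rcases Nat.eq_zero_or_pos k with rfl | hkpos
  · exact h0
  · obtain ⟨m, rfl⟩ := Nat.exists_eq_succ_of_ne_zero (Nat.pos_iff_ne_zero.mp hkpos)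
    have hmK : m < K := lt_trans (Nat.lt_succ_self m) hk
    have hEl : ∑ j, elb (m+1) j ≤ E (m+1) :=
      le_trans (le_max_left _ _) (hE m hmK).1
    have hEu : E (m+1) ≤ ∑ j, eub (m+1) j :=
      le_trans (hE m hmK).2 (min_le_left _ _)
    exact key_consistent N δ (elb (m+1)) (eub (m+1)) (elb (m+2)) (eub (m+2))
      (plb (m+1)) (pub (m+1)) (hA2a (m+1) hk) (hA2b (m+1) hk) (E (m+1)) hEl hEu
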